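/- Let n = 2k with k ≥ 1 and let X be an n×n complex cross matrix. For each i with 0 ≤ i < k, let Y_i be the n×n matrix that agrees with the identity matrix except that its entries in positions (i,i), (i,n-1-i), (n-1-i,i), (n-1-i,n-1-i) equal the corresponding entries of X. Then X = Y_{k-1} · Y_{k-2} · ⋯ · Y_0 (product taken in order of decreasing index). -/
import Mathlib


/-- An `n × n` complex matrix is a *cross matrix* if its nonzero entries lie
only on the main diagonal and the anti-diagonal (0-based indices). -/
def IsCrossMatrix {n : ℕ} (X : Matrix (Fin n) (Fin n) ℂ) : Prop :=
  ∀ i j : Fin n, j ≠ i → (i : ℕ) + (j : ℕ) + 1 ≠ n → X i j = 0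

/-- For `n = 2k`, a cross matrix factors as `X = Y_{k-1} ⬝ Y_{k-2} ⬝ ⋯ ⬝ Y₀`, where
`Yᵢ` agrees with the identity except at the four positions `(i,i)`, `(i,n-1-i)`,
`(n-1-i,i)`, `(n-1-i,n-1-i)`, where it agrees with `X`. -/
theorem crossMatrix_factorization_even_rev (k : ℕ) (hk : 1 ≤ k)
    (X : Matrix (Fin (2 * k)) (Fin (2 * k)) ℂ) (hX : IsCrossMatrix X)
    (Y : ℕ → Matrix (Fin (2 * k)) (Fin (2 * k)) ℂ)
    (hY : ∀ i < k, ∀ a b : Fin (2 * k),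
      Y i a b =
        if ((a : ℕ) = i ∨ (a : ℕ) = 2 * k - 1 - i) ∧
            ((b : ℕ) = i ∨ (b : ℕ) = 2 * k - 1 - i) then
          X a b
        else (1 : Matrix (Fin (2 * k)) (Fin (2 * k)) ℂ) a b) :
    X = (((List.range k).reverse).map Y).prod := by
  have key : ∀ m, m ≤ k → ∀ a b : Fin (2 * k),
      (((List.range m).reverse).map Y).prod a b =
        if (a : ℕ) < m ∨ 2 * k - m ≤ (a : ℕ) then X a b
        else (1 : Matrix (Fin (2 * k)) (Fin (2 * k)) ℂ) a b := by
    intro m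
    induction m with
    | zero =>
      intro _ a b
      have ha := a.isLt
      have : ¬ ((a : ℕ) < 0 ∨ 2 * k - 0 ≤ (a : ℕ)) := by omega
      rw [if_neg this]
      simp
    | succ m ih =>
      intro hm a b
      have hmk : m < k := hm
      have hm2k : m < 2 * k := by omega
      have hm2k' : 2 * k - 1 - m < 2 * k := by omega
      set P : Matrix (Fin (2 * k)) (Fin (2 * k)) ℂ :=
        (((List.range m).reverse).map Y).prod with hP
      have hprod : (((List.range (m + 1)).reverse).map Y).prod = Y m * P := by
        rw [List.range_succ, List.reverse_append]
        simp [hP]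
      rw [hprod, Matrix.mul_apply]
      set c1 : Fin (2 * k) := ⟨m, hm2k⟩ with hc1
      set c2 : Fin (2 * k) := ⟨2 * k - 1 - m, hm2k'⟩ with hc2
      by_cases ha : (a : ℕ) = m ∨ (a : ℕ) = 2 * k - 1 - m
      · -- the interesting rows
        have hrow : ∀ c : Fin (2 * k), Y m a c =
            X a c1 * (1 : Matrix (Fin (2 * k)) (Fin (2 * k)) ℂ) c1 c +
            X a c2 * (1 : Matrix (Fin (2 * k)) (Fin (2 * k)) ℂ) c2 c := by
          intro c
          rw [hY m hmk]
          by_cases hc : (c : ℕ) = m ∨ (c : ℕ) = 2 * k - 1 - m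
          · rw [if_pos ⟨ha, hc⟩]
            rcases hc with hc | hc
            · have : c = c1 := by simp [hc1, Fin.ext_iff, hc]
              subst this
              have h12 : c1 ≠ c2 := by simp [hc1, hc2, Fin.ext_iff]; omega
              simp [Matrix.one_apply, h12.symm]
            · have : c = c2 := by simp [hc2, Fin.ext_iff, hc]
              subst this
              have h12 : c1 ≠ c2 := by simp [hc1, hc2, Fin.ext_iff]; omega
              simp [Matrix.one_apply, h12]
          · rw [if_neg (by tauto)]
            have hac : a ≠ c := by
              intro h; subst h; tauto
            have h1c : c1 ≠ c := by
              intro h; apply hc; left; rw [← h]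
            have h2c : c2 ≠ c := by
              intro h; apply hc; right; rw [← h]
            simp [Matrix.one_apply, hac, h1c, h2c]
        have step1 : ∑ c, Y m a c * P c b
            = X a c1 * P c1 b + X a c2 * P c2 b := by
          calc ∑ c, Y m a c * P c b
              = ∑ c, (X a c1 * (1 : Matrix (Fin (2*k)) (Fin (2*k)) ℂ) c1 c * P c b
                  + X a c2 * (1 : Matrix (Fin (2*k)) (Fin (2*k)) ℂ) c2 c * P c b) := by
                refine Finset.sum_congr rfl fun c _ => ?_
                rw [hrow c, add_mul]
            _ = X a c1 * ∑ c, (1 : Matrix (Fin (2*k)) (Fin (2*k)) ℂ) c1 c * P c b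
                  + X a c2 * ∑ c, (1 : Matrix (Fin (2*k)) (Fin (2*k)) ℂ) c2 c * P c b := by
                rw [Finset.sum_add_distrib, Finset.mul_sum, Finset.mul_sum]
                simp [mul_assoc]
            _ = X a c1 * (((1 : Matrix (Fin (2*k)) (Fin (2*k)) ℂ) * P) c1 b) + X a c2 * (((1 : Matrix (Fin (2*k)) (Fin (2*k)) ℂ) * P) c2 b) := by
                rw [Matrix.mul_apply, Matrix.mul_apply]
            _ = X a c1 * P c1 b + X a c2 * P c2 b := by rw [Matrix.one_mul]
        rw [step1, ih (by omega) c1 b, ih (by omega) c2 b]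
        have hnc1 : ¬ ((c1 : ℕ) < m ∨ 2 * k - m ≤ (c1 : ℕ)) := by simp [hc1]; omega
        have hnc2 : ¬ ((c2 : ℕ) < m ∨ 2 * k - m ≤ (c2 : ℕ)) := by simp [hc2]; omega
        rw [if_neg hnc1, if_neg hnc2]
        have htarget : (a : ℕ) < m + 1 ∨ 2 * k - (m + 1) ≤ (a : ℕ) := by omega
        rw [if_pos htarget]
        by_cases hb1 : b = c1
        · subst hb1
          have h12 : c1 ≠ c2 := by simp [hc1, hc2, Fin.ext_iff]; omega
          simp [Matrix.one_apply, h12.symm]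
        · by_cases hb2 : b = c2
          · subst hb2
            have h12 : c1 ≠ c2 := by simp [hc1, hc2, Fin.ext_iff]; omega
            simp [Matrix.one_apply, h12]
          · have hXab : X a b = 0 := by
              apply hX a b
              · intro h; subst h
                rcases ha with h | h
                · exact hb1 (by simp [hc1, Fin.ext_iff, h])
                · exact hb2 (by simp [hc2, Fin.ext_iff, h])
              · intro h
                have hb1' : (b : ℕ) ≠ m := fun hh => hb1 (by simp [hc1, Fin.ext_iff, hh])
                have hb2' : (b : ℕ) ≠ 2 * k - 1 - m := fun hh => hb2 (by simp [hc2, Fin.ext_iff, hh])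
                omega
            have h1 : c1 ≠ b := fun h => hb1 h.symm
            have h2 : c2 ≠ b := fun h => hb2 h.symm
            rw [hXab, Matrix.one_apply_ne h1, Matrix.one_apply_ne h2]
            ring
      · -- identity rows
        push_neg at ha
        have hrow : ∀ c : Fin (2 * k), Y m a c =
            (1 : Matrix (Fin (2 * k)) (Fin (2 * k)) ℂ) a c := by
          intro c
          rw [hY m hmk, if_neg (by tauto)]
        have step1 : ∑ c, Y m a c * P c b = P a b := by
          calc ∑ c, Y m a c * P c b
              = ∑ c, (1 : Matrix (Fin (2*k)) (Fin (2*k)) ℂ) a c * P c b := by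
                exact Finset.sum_congr rfl fun c _ => by rw [hrow c]
            _ = ((1 : Matrix (Fin (2*k)) (Fin (2*k)) ℂ) * P) a b := by rw [Matrix.mul_apply]
            _ = P a b := by rw [Matrix.one_mul]
        rw [step1, ih (by omega) a b]
        have : ((a : ℕ) < m ∨ 2 * k - m ≤ (a : ℕ)) ↔
            ((a : ℕ) < m + 1 ∨ 2 * k - (m + 1) ≤ (a : ℕ)) := by omega
        exact if_congr this rfl rfl
  ext a b
  have := key k le_rfl a b
  have ha : (a : ℕ) < k ∨ 2 * k - k ≤ (a : ℕ) := by omega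
  rw [this, if_pos ha]
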